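/- If a topological group Λ has property (T_B) for a Banach space B (i.e., for every isometric linear representation ρ on B, the restriction of ρ to the canonical complement B'_{ρ(Λ)} of the invariant vectors does not have almost invariant vectors), then every ρ-cocycle with values in B'_{ρ(Λ)} that is a limit of coboundaries in the topology of uniform convergence on compact sets is itself a coboundary — equivalently, the space of coboundaries is closed in the space of cocycles into the complement of invariant vectors. -/

import Mathlib

/-- Let `Λ` be a topological group and `B` a superreflexive Banach
space (normalized to be uniformly convex and uniformly smooth).  Suppose `Λ` has
property `(T_B)`: for every continuous isometric linear representation `ρ` on `B`,
the restriction of `ρ` to the canonical complement `B'_{ρ(Λ)}` (the annihilator of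
the invariant functionals of the contragredient representation) does not have almost
invariant vectors.  Then for every such `ρ`, every continuous `ρ`-cocycle `b` with
values in `B'_{ρ(Λ)}` which lies in the closure of the coboundaries in the topology
of uniform convergence on compact sets is itself a coboundary. -/
theorem TB_implies_coboundaries_closed
    (Λ : Type) [Group Λ] [TopologicalSpace Λ] [IsTopologicalGroup Λ]
    (B : Type) [NormedAddCommGroup B] [NormedSpace ℝ B] [CompleteSpace B]
    [UniformConvexSpace B]
    (hsmooth : ∀ ε > (0 : ℝ), ∃ δ > (0 : ℝ), ∀ x y : B, ‖x‖ = 1 → ‖y‖ ≤ δ →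
      ‖x + y‖ + ‖x - y‖ ≤ 2 + ε * ‖y‖)
    (hTB : ∀ ρ : Λ →* (B ≃ₗᵢ[ℝ] B), Continuous (fun q : Λ × B => ρ q.1 q.2) →
      ¬ (∀ K : Set Λ, IsCompact K → ∀ ε > (0 : ℝ), ∃ ξ : B, ‖ξ‖ = 1 ∧
          (∀ φ : B →L[ℝ] ℝ, (∀ (g : Λ) (y : B), φ (ρ g y) = φ y) → φ ξ = 0) ∧
          ∀ g ∈ K, ‖ξ - ρ g ξ‖ ≤ ε)) :
    ∀ ρ : Λ →* (B ≃ₗᵢ[ℝ] B), Continuous (fun q : Λ × B => ρ q.1 q.2) →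
    ∀ b : Λ → B, Continuous b →
    (∀ g h : Λ, b (g * h) = b g + ρ g (b h)) →
    (∀ g : Λ, ∀ φ : B →L[ℝ] ℝ,
      (∀ (g' : Λ) (y : B), φ (ρ g' y) = φ y) → φ (b g) = 0) →
    (∀ K : Set Λ, IsCompact K → ∀ ε > (0 : ℝ), ∃ ξ : B,
      (∀ φ : B →L[ℝ] ℝ, (∀ (g' : Λ) (y : B), φ (ρ g' y) = φ y) → φ ξ = 0) ∧
      ∀ g ∈ K, ‖b g - (ξ - ρ g ξ)‖ ≤ ε) →
    ∃ ξ : B, ∀ g : Λ, b g = ξ - ρ g ξ := by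
  intro ρ hρ b hb hcoc hcompl hclos
  have hT := hTB ρ hρ
  push_neg at hT
  obtain ⟨K, hK, ε₀, hε₀, hKey⟩ := hT
  -- key quantitative lemma
  have key : ∀ ξ : B, (∀ φ : B →L[ℝ] ℝ, (∀ (g' : Λ) (y : B), φ (ρ g' y) = φ y) → φ ξ = 0) →
      ∀ M : ℝ, 0 ≤ M → (∀ g ∈ K, ‖ξ - ρ g ξ‖ ≤ M) → ε₀ * ‖ξ‖ ≤ M := by
    intro ξ hξ M hM hbound
    rcases eq_or_ne ξ 0 with rfl | hne
    · simpa using hM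
    · have hnorm : (0:ℝ) < ‖ξ‖ := norm_pos_iff.mpr hne
      set c : ℝ := ‖ξ‖⁻¹ with hc
      have hcpos : 0 < c := inv_pos.mpr hnorm
      have h1 : ‖c • ξ‖ = 1 := by
        rw [norm_smul, hc, Real.norm_eq_abs, abs_of_pos hcpos,
          inv_mul_cancel₀ hnorm.ne']
      have hξ' : ∀ φ : B →L[ℝ] ℝ, (∀ (g' : Λ) (y : B), φ (ρ g' y) = φ y) → φ (c • ξ) = 0 := by
        intro φ hφ
        rw [map_smul, hξ φ hφ, smul_zero]
      obtain ⟨g, hg, hgt⟩ := hKey (c • ξ) h1 hξ'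
      have heq : ‖c • ξ - ρ g (c • ξ)‖ = c * ‖ξ - ρ g ξ‖ := by
        rw [map_smul, ← smul_sub, norm_smul, Real.norm_eq_abs, abs_of_pos hcpos]
      have h2 : ε₀ < c * M := lt_of_lt_of_le (heq ▸ hgt)
        (mul_le_mul_of_nonneg_left (hbound g hg) hcpos.le)
      have : ε₀ * ‖ξ‖ < c * M * ‖ξ‖ := by
        exact mul_lt_mul_of_pos_right h2 hnorm
      rw [hc] at this
      have heq2 : ‖ξ‖⁻¹ * M * ‖ξ‖ = M := by field_simp
      linarith [heq2 ▸ this]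
  -- choose approximating sequence
  choose ξs hξs1 hξs2 using fun n : ℕ =>
    hclos K hK (1 / (n + 1)) (by positivity)
  -- difference bound
  have hdiff : ∀ n m : ℕ, ε₀ * ‖ξs n - ξs m‖ ≤ 1 / (n + 1) + 1 / (m + 1) := by
    intro n m
    refine key _ (fun φ hφ => by rw [map_sub, hξs1 n φ hφ, hξs1 m φ hφ, sub_zero]) _
      (by positivity) ?_
    intro g hg
    have e : (ξs n - ξs m) - ρ g (ξs n - ξs m)
        = (b g - (ξs m - ρ g (ξs m))) - (b g - (ξs n - ρ g (ξs n))) := by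
      rw [map_sub]; abel
    rw [e]
    calc ‖(b g - (ξs m - ρ g (ξs m))) - (b g - (ξs n - ρ g (ξs n)))‖
        ≤ ‖b g - (ξs m - ρ g (ξs m))‖ + ‖b g - (ξs n - ρ g (ξs n))‖ := norm_sub_le _ _
      _ ≤ 1 / (m + 1) + 1 / (n + 1) := add_le_add (hξs2 m g hg) (hξs2 n g hg)
      _ = 1 / (n + 1) + 1 / (m + 1) := by ring
  have hdist : ∀ n m : ℕ, ‖ξs n - ξs m‖ ≤ (1 / (n + 1) + 1 / (m + 1)) / ε₀ := by
    intro n m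
    rw [le_div_iff₀ hε₀, mul_comm]
    exact hdiff n m
  -- Cauchy
  have hcauchy : CauchySeq ξs := by
    refine cauchySeq_of_le_tendsto_0 (fun N : ℕ => 2 / ((N + 1) * ε₀)) (fun n m N hn hm => ?_) ?_
    · rw [dist_eq_norm]
      refine (hdist n m).trans ?_
      rw [div_le_div_iff₀ hε₀ (by positivity)]
      have h1 : (1:ℝ) / (n + 1) ≤ 1 / (N + 1) := by
        apply one_div_le_one_div_of_le (by positivity)
        have := (Nat.cast_le (α := ℝ)).mpr hn
        linarith
      have h2 : (1:ℝ) / (m + 1) ≤ 1 / (N + 1) := by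
        apply one_div_le_one_div_of_le (by positivity)
        have := (Nat.cast_le (α := ℝ)).mpr hm
        linarith
      have hN : (0:ℝ) < N + 1 := by positivity
      have : (1:ℝ)/(n+1) + 1/(m+1) ≤ 2/(N+1) := by
        calc (1:ℝ)/(n+1) + 1/(m+1) ≤ 1/(N+1) + 1/(N+1) := add_le_add h1 h2
          _ = 2/(N+1) := by ring
      calc ((1:ℝ)/(n+1) + 1/(m+1)) * ((N+1) * ε₀)
          ≤ 2/(N+1) * ((N+1) * ε₀) := by
            apply mul_le_mul_of_nonneg_right this (by positivity)
        _ = 2 * ε₀ := by field_simp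
    · have : Filter.Tendsto (fun N : ℕ => 2 / ((N + 1) * ε₀)) Filter.atTop (nhds 0) := by
        apply Filter.Tendsto.div_atTop (tendsto_const_nhds)
        apply Filter.Tendsto.atTop_mul_const hε₀
        exact Filter.tendsto_atTop_add_const_right _ 1 tendsto_natCast_atTop_atTop
      exact this
  obtain ⟨ξ, hlim⟩ := cauchySeq_tendsto_of_complete hcauchy
  refine ⟨ξ, fun g => ?_⟩
  -- second approximating sequence including g
  have hKg : IsCompact (K ∪ {g}) := hK.union isCompact_singleton
  choose ηs hηs1 hηs2 using fun n : ℕ =>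
    hclos (K ∪ {g}) hKg (1 / (n + 1)) (by positivity)
  have hηK : ∀ n, ∀ g' ∈ K, ‖b g' - (ηs n - ρ g' (ηs n))‖ ≤ 1 / (n + 1) :=
    fun n g' hg' => hηs2 n g' (Or.inl hg')
  have hηg : ∀ n, ‖b g - (ηs n - ρ g (ηs n))‖ ≤ 1 / (n + 1) :=
    fun n => hηs2 n g (Or.inr rfl)
  have hdiff2 : ∀ n : ℕ, ε₀ * ‖ξs n - ηs n‖ ≤ 2 / (n + 1) := by
    intro n
    refine key _ (fun φ hφ => by rw [map_sub, hξs1 n φ hφ, hηs1 n φ hφ, sub_zero]) _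
      (by positivity) ?_
    intro g' hg'
    have e : (ξs n - ηs n) - ρ g' (ξs n - ηs n)
        = (b g' - (ηs n - ρ g' (ηs n))) - (b g' - (ξs n - ρ g' (ξs n))) := by
      rw [map_sub]; abel
    rw [e]
    calc ‖(b g' - (ηs n - ρ g' (ηs n))) - (b g' - (ξs n - ρ g' (ξs n)))‖
        ≤ ‖b g' - (ηs n - ρ g' (ηs n))‖ + ‖b g' - (ξs n - ρ g' (ξs n))‖ := norm_sub_le _ _
      _ ≤ 1 / (n + 1) + 1 / (n + 1) := add_le_add (hηK n g' hg') (hξs2 n g' hg')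
      _ = 2 / (n + 1) := by ring
  -- final estimate
  have hbound : ∀ n : ℕ, ‖b g - (ξ - ρ g ξ)‖
      ≤ 1 / (n + 1) + 2 * (2 / ((n + 1) * ε₀) + ‖ξs n - ξ‖) := by
    intro n
    have e : b g - (ξ - ρ g ξ)
        = (b g - (ηs n - ρ g (ηs n))) + ((ηs n - ξ) - ρ g (ηs n - ξ)) := by
      rw [map_sub]; abel
    have h3 : ‖(ηs n - ξ) - ρ g (ηs n - ξ)‖ ≤ 2 * ‖ηs n - ξ‖ := by
      calc ‖(ηs n - ξ) - ρ g (ηs n - ξ)‖ ≤ ‖ηs n - ξ‖ + ‖ρ g (ηs n - ξ)‖ := norm_sub_le _ _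
        _ = ‖ηs n - ξ‖ + ‖ηs n - ξ‖ := by rw [(ρ g).norm_map]
        _ = 2 * ‖ηs n - ξ‖ := by ring
    have h4 : ‖ηs n - ξ‖ ≤ 2 / ((n + 1) * ε₀) + ‖ξs n - ξ‖ := by
      calc ‖ηs n - ξ‖ ≤ ‖ηs n - ξs n‖ + ‖ξs n - ξ‖ := norm_sub_le_norm_sub_add_norm_sub _ _ _
        _ ≤ 2 / ((n + 1) * ε₀) + ‖ξs n - ξ‖ := by
            refine add_le_add ?_ le_rfl
            have h5 : (0:ℝ) < (n:ℝ) + 1 := by positivity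
            have h6 := (le_div_iff₀ h5).mp (hdiff2 n)
            rw [norm_sub_rev, le_div_iff₀ (by positivity : (0:ℝ) < ((n:ℝ)+1)*ε₀)]
            calc ‖ξs n - ηs n‖ * (((n:ℝ)+1)*ε₀) = ε₀ * ‖ξs n - ηs n‖ * ((n:ℝ)+1) := by ring
              _ ≤ 2 := h6
    calc ‖b g - (ξ - ρ g ξ)‖ = ‖(b g - (ηs n - ρ g (ηs n))) + ((ηs n - ξ) - ρ g (ηs n - ξ))‖ := by
          rw [e]
      _ ≤ ‖b g - (ηs n - ρ g (ηs n))‖ + ‖(ηs n - ξ) - ρ g (ηs n - ξ)‖ := norm_add_le _ _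
      _ ≤ 1 / (n + 1) + 2 * ‖ηs n - ξ‖ := by
          refine add_le_add (hηg n) ?_
          linarith [h3]
      _ ≤ 1 / (n + 1) + 2 * (2 / ((n + 1) * ε₀) + ‖ξs n - ξ‖) := by
          refine add_le_add le_rfl ?_
          linarith [h4]
  have htend : Filter.Tendsto
      (fun n : ℕ => 1 / (n + 1) + 2 * (2 / ((n + 1) * ε₀) + ‖ξs n - ξ‖))
      Filter.atTop (nhds 0) := by
    have t1 : Filter.Tendsto (fun n : ℕ => (1:ℝ) / (n + 1)) Filter.atTop (nhds 0) :=
      Filter.Tendsto.div_atTop tendsto_const_nhds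
        (Filter.tendsto_atTop_add_const_right _ 1 tendsto_natCast_atTop_atTop)
    have t2 : Filter.Tendsto (fun n : ℕ => (2:ℝ) / ((n + 1) * ε₀)) Filter.atTop (nhds 0) :=
      Filter.Tendsto.div_atTop tendsto_const_nhds
        (Filter.Tendsto.atTop_mul_const hε₀
          (Filter.tendsto_atTop_add_const_right _ 1 tendsto_natCast_atTop_atTop))
    have t3 : Filter.Tendsto (fun n : ℕ => ‖ξs n - ξ‖) Filter.atTop (nhds 0) :=
      tendsto_iff_norm_sub_tendsto_zero.mp hlim
    have := t1.add (((t2.add t3).const_mul (2:ℝ)))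
    simpa using this
  have h0 : ‖b g - (ξ - ρ g ξ)‖ ≤ 0 := ge_of_tendsto' htend hbound
  exact sub_eq_zero.mp (norm_le_zero_iff.mp h0)
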